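/- Consider the Markov chain X_0, X_1, ..., X_s on nonnegative integers with parameters α ∈ (0, α_0) (α_0 a sufficiently small constant) and threshold G, where: from state a > G, the chain stays at a with probability (1−2α)/(1−α) and moves to a+c with probability α^c for each c ≥ 1; from state a ≤ G, it moves to max(a−1, 0) with probability (1−2α)/(1−α) and to a+c with probability α^c for each c ≥ 1. Assume the initial distribution satisfies Pr[X_0 = c] ≤ (α/(1−2α))·(2α(1−α)/(1−2α))^{c−1} for all c ∈ [1,G] and Pr[X_0 > G] ≤ (α/(1−α))·(2α(1−α)/(1−2α))^G. Then for every ℓ ∈ [0,s]: Pr[X_ℓ = c] ≤ (α/(1−2α))·(2α(1−α)/(1−2α))^{c−1} for each c ∈ [1,G], and Pr[X_ℓ > G] ≤ (ℓ+1)·(α/(1−α))·(2α(1−α)/(1−2α))^G. -/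

import Mathlib

/-- Transition kernel of the Markov chain: from a state a > G, stay at a with
probability (1-2α)/(1-α) and move to a+c with probability α^c (c ≥ 1); from
a state a ≤ G, move to max(a-1,0) with probability (1-2α)/(1-α) and to a+c
with probability α^c (c ≥ 1). -/
noncomputable def mkKer (α : ℝ) (G a b : ℕ) : ℝ :=
  if a ≤ G then
    (if b = a - 1 then (1 - 2 * α) / (1 - α) else if a < b then α ^ (b - a) else 0)
  else
    (if b = a then (1 - 2 * α) / (1 - α) else if a < b then α ^ (b - a) else 0)

section MkAux
open Finset
variable {α : ℝ}


variable {α : ℝ}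

/-- geometric tail sum starting strictly above `a` -/
lemma mk_geom (hα : 0 < α) (h1 : α < 1) (a : ℕ) :
    Summable (fun b : ℕ => if a < b then α ^ (b - a) else 0) ∧
    (∑' b : ℕ, if a < b then α ^ (b - a) else 0) = α * (1 - α)⁻¹ := by
  set f : ℕ → ℝ := fun b => if a < b then α ^ (b - a) else 0 with hf
  have hinj : Function.Injective (fun c : ℕ => a + 1 + c) := fun x y h => by simpa using h
  have hsupp : ∀ b, b ∉ Set.range (fun c : ℕ => a + 1 + c) → f b = 0 := by
    intro b hb
    have : ¬ a < b := fun h => hb ⟨b - a - 1, show a + 1 + (b - a - 1) = b by omega⟩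
    simp [hf, this]
  have hcomp : (fun c : ℕ => f (a + 1 + c)) = fun c : ℕ => α * α ^ c := by
    funext c
    have h : a < a + 1 + c := by omega
    have h2 : a + 1 + c - a = c + 1 := by omega
    simp [hf, h, h2, pow_succ, mul_comm]
  have hs : Summable fun c : ℕ => f (a + 1 + c) := by
    rw [hcomp]
    exact (summable_geometric_of_lt_one hα.le h1).mul_left α
  have hsum : Summable f := (hinj.summable_iff hsupp).mp hs
  refine ⟨hsum, ?_⟩
  rw [← hinj.tsum_eq (Function.support_subset_iff'.2 hsupp), hcomp, tsum_mul_left,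
    tsum_geometric_of_lt_one hα.le h1]


lemma mkKer_eq (G a b : ℕ) :
    mkKer α G a b = (if b = (if a ≤ G then a - 1 else a) then (1 - 2 * α) / (1 - α) else 0)
      + (if a < b then α ^ (b - a) else 0) := by
  unfold mkKer
  split_ifs <;> first | (exfalso; omega) | ring

lemma mkKer_nonneg (hα : 0 < α) (hα4 : α < 1/4) (G a b : ℕ) : 0 ≤ mkKer α G a b := by
  have h1 : (0:ℝ) ≤ (1 - 2*α)/(1-α) := by
    apply div_nonneg <;> linarith
  unfold mkKer
  split_ifs <;> first | exact h1 | positivity | rfl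

lemma mkKer_row_summable (hα : 0 < α) (hα4 : α < 1/4) (G a : ℕ) :
    Summable (fun b => mkKer α G a b) := by
  have h1 : α < 1 := by linarith
  have := (mk_geom hα h1 a).1
  have h2 : Summable (fun b : ℕ =>
      if b = (if a ≤ G then a - 1 else a) then (1 - 2*α)/(1-α) else 0) :=
    summable_of_ne_finset_zero (s := {if a ≤ G then a - 1 else a})
      (fun b hb => if_neg (by simpa using hb))
  simpa only [← mkKer_eq] using h2.add this

lemma mkKer_row_sum (hα : 0 < α) (hα4 : α < 1/4) (G a : ℕ) :
    (∑' b, mkKer α G a b) = 1 := by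
  have h1 : α < 1 := by linarith
  have hg := mk_geom hα h1 a
  have h2 : Summable (fun b : ℕ =>
      if b = (if a ≤ G then a - 1 else a) then (1 - 2*α)/(1-α) else 0) :=
    summable_of_ne_finset_zero (s := {if a ≤ G then a - 1 else a})
      (fun b hb => if_neg (by simpa using hb))
  have : (∑' b, mkKer α G a b)
      = (∑' b : ℕ, if b = (if a ≤ G then a - 1 else a) then (1 - 2*α)/(1-α) else 0)
        + (∑' b : ℕ, if a < b then α ^ (b - a) else 0) := by
    rw [← Summable.tsum_add h2 hg.1]
    exact tsum_congr fun b => mkKer_eq G a b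
  rw [this, tsum_ite_eq, hg.2]
  have h3 : (1:ℝ) - α ≠ 0 := by linarith
  field_simp
  ring

/-- column tail: `a ≤ G` case, exact value -/
lemma mkKer_coltail_le (hα : 0 < α) (hα4 : α < 1/4) {G a : ℕ} (ha : a ≤ G) :
    Summable (fun b : ℕ => if G < b then mkKer α G a b else 0) ∧
    (∑' b : ℕ, if G < b then mkKer α G a b else 0) = α ^ (G + 1 - a) * (1 - α)⁻¹ := by
  have h1 : α < 1 := by linarith
  have heq : (fun b : ℕ => if G < b then mkKer α G a b else 0)
      = fun b : ℕ => if G < b then α ^ (b - a) else 0 := by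
    funext b
    by_cases hb : G < b
    · have hba : a < b := by omega
      have hb1 : b ≠ a - 1 := by omega
      simp [mkKer, ha, hb, hb1, hba]
    · simp [hb]
  rw [heq]
  -- reindex by c ↦ G + 1 + c
  have hinj : Function.Injective (fun c : ℕ => G + 1 + c) := fun x y h => by simpa using h
  set f : ℕ → ℝ := fun b => if G < b then α ^ (b - a) else 0 with hf
  have hsupp : ∀ b, b ∉ Set.range (fun c : ℕ => G + 1 + c) → f b = 0 := by
    intro b hb
    have : ¬ G < b := fun h => hb ⟨b - G - 1, show G + 1 + (b - G - 1) = b by omega⟩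
    simp [hf, this]
  have hcomp : (fun c : ℕ => f (G + 1 + c)) = fun c : ℕ => α ^ (G + 1 - a) * α ^ c := by
    funext c
    have h : G < G + 1 + c := by omega
    have h2 : G + 1 + c - a = (G + 1 - a) + c := by omega
    simp [hf, h, h2, pow_add]
  have hs : Summable fun c : ℕ => f (G + 1 + c) := by
    rw [hcomp]
    exact (summable_geometric_of_lt_one hα.le h1).mul_left _
  have hsum : Summable f := (hinj.summable_iff hsupp).mp hs
  refine ⟨hsum, ?_⟩
  rw [← hinj.tsum_eq (Function.support_subset_iff'.2 hsupp), hcomp, tsum_mul_left,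
    tsum_geometric_of_lt_one hα.le h1]

/-- column tail: bounded by 1 in all cases -/
lemma mkKer_coltail_all (hα : 0 < α) (hα4 : α < 1/4) (G a : ℕ) :
    Summable (fun b : ℕ => if G < b then mkKer α G a b else 0) ∧
    (∑' b : ℕ, if G < b then mkKer α G a b else 0) ≤ 1 := by
  have hrow := mkKer_row_summable hα hα4 G a
  have hnn : ∀ b : ℕ, 0 ≤ if G < b then mkKer α G a b else 0 := by
    intro b; split_ifs; exacts [mkKer_nonneg hα hα4 G a b, le_refl 0]
  have hle : ∀ b : ℕ, (if G < b then mkKer α G a b else 0) ≤ mkKer α G a b := by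
    intro b; split_ifs; exacts [le_refl _, mkKer_nonneg hα hα4 G a b]
  have hsum : Summable (fun b : ℕ => if G < b then mkKer α G a b else 0) :=
    Summable.of_nonneg_of_le hnn hle hrow
  refine ⟨hsum, ?_⟩
  calc (∑' b : ℕ, if G < b then mkKer α G a b else 0) ≤ ∑' b, mkKer α G a b :=
        Summable.tsum_le_tsum hle hsum hrow
    _ = 1 := mkKer_row_sum hα hα4 G a
lemma geomS (hα : 0 < α) (hα4 : α < 1/4) :
    ∀ c : ℕ, 1 ≤ c →
      ∑ a ∈ Finset.range c,
        (if a = 0 then 1 else α / (1 - 2*α) * (2*α*(1-α)/(1-2*α)) ^ (a - 1)) * α ^ (c - a)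
      = α * (2*α*(1-α)/(1-2*α)) ^ (c - 1) := by
  have h2 : (1:ℝ) - 2*α ≠ 0 := by intro h; nlinarith
  intro c hc
  induction c, hc using Nat.le_induction with
  | base => simp
  | succ c hc ih =>
    rw [Finset.sum_range_succ]
    have hstep : ∑ a ∈ Finset.range c,
        (if a = 0 then 1 else α / (1 - 2*α) * (2*α*(1-α)/(1-2*α)) ^ (a - 1)) * α ^ (c + 1 - a)
        = (∑ a ∈ Finset.range c,
            (if a = 0 then 1 else α / (1 - 2*α) * (2*α*(1-α)/(1-2*α)) ^ (a - 1)) * α ^ (c - a)) * α := by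
      rw [Finset.sum_mul]
      refine Finset.sum_congr rfl fun a ha => ?_
      have halt : a < c := Finset.mem_range.mp ha
      have : c + 1 - a = (c - a) + 1 := by omega
      rw [this, pow_succ]
      ring
    have hc0 : c ≠ 0 := by omega
    have hcc : c + 1 - c = 1 := by omega
    rw [hstep, ih, if_neg hc0, hcc]
    have hr : (2*α*(1-α)/(1-2*α)) ^ ((c+1) - 1) = (2*α*(1-α)/(1-2*α)) ^ (c-1) * (2*α*(1-α)/(1-2*α)) := by
      rw [← pow_succ]
      congr 1
      omega
    rw [hr]
    have key : α * α + α / (1 - 2*α) * α = α * (2*α*(1-α)/(1-2*α)) := by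
      simp only [div_eq_mul_inv]
      linear_combination (-α^2) * mul_inv_cancel₀ h2
    calc α * (2*α*(1-α)/(1-2*α)) ^ (c - 1) * α
          + α / (1 - 2*α) * (2*α*(1-α)/(1-2*α)) ^ (c - 1) * α ^ 1
        = (2*α*(1-α)/(1-2*α)) ^ (c - 1) * (α * α + α / (1 - 2*α) * α) := by ring
      _ = α * ((2*α*(1-α)/(1-2*α)) ^ (c - 1) * (2*α*(1-α)/(1-2*α))) := by rw [key]; ring

end MkAux

set_option maxHeartbeats 2000000 in
/-- for α sufficiently small, if the chain μ evolves by the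
kernel above and the initial distribution satisfies the stated bounds, then
for every ℓ ∈ [0,s]:
Pr[X_ℓ = c] ≤ (α/(1-2α))·(2α(1-α)/(1-2α))^{c-1} for each c ∈ [1,G], and
Pr[X_ℓ > G] ≤ (ℓ+1)·(α/(1-α))·(2α(1-α)/(1-2α))^G. -/
theorem stmt15 :
    ∃ α0 : ℝ, 0 < α0 ∧ ∀ α : ℝ, 0 < α → α < α0 →
      ∀ (G s : ℕ) (μ : ℕ → ℕ → ℝ),
        (∀ b, 0 ≤ μ 0 b) →
        (∑' b, μ 0 b) = 1 →
        (∀ ℓ b, μ (ℓ + 1) b = ∑' a, μ ℓ a * mkKer α G a b) →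
        (∀ c, 1 ≤ c → c ≤ G →
          μ 0 c ≤ α / (1 - 2 * α) * (2 * α * (1 - α) / (1 - 2 * α)) ^ (c - 1)) →
        ((∑' b, if G < b then μ 0 b else 0)
          ≤ α / (1 - α) * (2 * α * (1 - α) / (1 - 2 * α)) ^ G) →
        ∀ ℓ ≤ s,
          (∀ c, 1 ≤ c → c ≤ G →
            μ ℓ c ≤ α / (1 - 2 * α) * (2 * α * (1 - α) / (1 - 2 * α)) ^ (c - 1)) ∧
          (∑' b, if G < b then μ ℓ b else 0)
            ≤ ((ℓ : ℝ) + 1) * (α / (1 - α)) * (2 * α * (1 - α) / (1 - 2 * α)) ^ G := by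
  refine ⟨1/4, by norm_num, ?_⟩
  intro α hα hα4 G s μ h0nn h0sum hrec h0pt h0tail
  have h1 : α < 1 := by linarith
  have h1' : (0:ℝ) < 1 - α := by linarith
  have h2' : (0:ℝ) < 1 - 2*α := by linarith
  set A : ℝ := α / (1 - 2*α) with hA
  set r : ℝ := 2*α*(1-α)/(1-2*α) with hr
  have hrpos : 0 ≤ r := by rw [hr]; positivity
  have hApos : 0 ≤ A := by rw [hA]; positivity
  have hq : (0:ℝ) ≤ (1-2*α)/(1-α) := by positivity
  have hgeomS : ∀ c : ℕ, 1 ≤ c →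
      ∑ a ∈ Finset.range c, (if a = 0 then 1 else A * r ^ (a - 1)) * α ^ (c - a)
      = α * r ^ (c - 1) := by
    have h := geomS hα hα4
    rw [← hA, ← hr] at h
    exact h
  have main : ∀ ℓ : ℕ, (∀ b, 0 ≤ μ ℓ b) ∧ Summable (μ ℓ) ∧ (∑' b, μ ℓ b) = 1 ∧
      (∀ c, 1 ≤ c → c ≤ G → μ ℓ c ≤ A * r ^ (c - 1)) ∧
      (∑' b, if G < b then μ ℓ b else 0) ≤ ((ℓ:ℝ) + 1) * (α/(1-α)) * r ^ G := by
    intro ℓ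
    induction ℓ with
    | zero =>
      have hs : Summable (μ 0) := by
        by_contra h
        rw [tsum_eq_zero_of_not_summable h] at h0sum
        norm_num at h0sum
      refine ⟨h0nn, hs, h0sum, h0pt, ?_⟩
      simpa using h0tail
    | succ ℓ ih =>
      obtain ⟨hfnn, hfsum, hftsum, hfpt, hftail⟩ := ih
      have hfB : ∀ a ≤ G, μ ℓ a ≤ if a = 0 then 1 else A * r ^ (a - 1) := by
        intro a haG
        by_cases ha0 : a = 0
        · subst ha0
          rw [if_pos rfl]
          calc μ ℓ 0 ≤ ∑' b, μ ℓ b := Summable.le_tsum hfsum 0 (fun j _ => hfnn j)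
            _ = 1 := hftsum
        · rw [if_neg ha0]
          exact hfpt a (by omega) haG
      have hBnn : ∀ a : ℕ, (0:ℝ) ≤ if a = 0 then 1 else A * r ^ (a - 1) := by
        intro a; split_ifs
        · norm_num
        · positivity
      have hFnn : ∀ p : ℕ × ℕ, 0 ≤ μ ℓ p.1 * mkKer α G p.1 p.2 :=
        fun p => mul_nonneg (hfnn p.1) (mkKer_nonneg hα hα4 G p.1 p.2)
      have hrowsum : ∀ a, (∑' b, μ ℓ a * mkKer α G a b) = μ ℓ a := by
        intro a; rw [tsum_mul_left, mkKer_row_sum hα hα4 G a, mul_one]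
      have hF : Summable (fun p : ℕ × ℕ => μ ℓ p.1 * mkKer α G p.1 p.2) := by
        refine (summable_prod_of_nonneg hFnn).mpr ⟨?_, ?_⟩
        · intro a; exact (mkKer_row_summable hα hα4 G a).mul_left (μ ℓ a)
        · simpa only [hrowsum] using hfsum
      have hgnn : ∀ b, 0 ≤ μ (ℓ+1) b := by
        intro b; rw [hrec ℓ b]
        exact tsum_nonneg fun a => mul_nonneg (hfnn a) (mkKer_nonneg hα hα4 G a b)
      have hswapnn : ∀ p : ℕ × ℕ, 0 ≤ μ ℓ p.2 * mkKer α G p.2 p.1 :=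
        fun p => mul_nonneg (hfnn p.2) (mkKer_nonneg hα hα4 G p.2 p.1)
      have hgsum : Summable (μ (ℓ+1)) := by
        have hswap : Summable (fun p : ℕ × ℕ => μ ℓ p.2 * mkKer α G p.2 p.1) := hF.prod_symm
        have h2 := ((summable_prod_of_nonneg hswapnn).mp hswap).2
        exact h2.congr fun b => (hrec ℓ b).symm
      have hgtsum : (∑' b, μ (ℓ+1) b) = 1 := by
        calc (∑' b, μ (ℓ+1) b) = ∑' b, ∑' a, μ ℓ a * mkKer α G a b :=
              tsum_congr fun b => hrec ℓ b
          _ = ∑' a, ∑' b, μ ℓ a * mkKer α G a b :=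
              Summable.tsum_comm (f := fun a b => μ ℓ a * mkKer α G a b) hF
          _ = ∑' a, μ ℓ a := tsum_congr hrowsum
          _ = 1 := hftsum
      have hgpt : ∀ c, 1 ≤ c → c ≤ G → μ (ℓ+1) c ≤ A * r ^ (c - 1) := by
        intro c hc1 hcG
        have hzero : ∀ a ∉ Finset.range (c+2), μ ℓ a * mkKer α G a c = 0 := by
          intro a ha
          have ha' : c + 2 ≤ a := by
            have := Finset.mem_range.not.mp ha; omega
          have hK : mkKer α G a c = 0 := by
            unfold mkKer; split_ifs <;> first | (exfalso; omega) | rfl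
          rw [hK, mul_zero]
        rw [hrec ℓ c, tsum_eq_sum hzero, Finset.sum_range_succ, Finset.sum_range_succ]
        have hKcc : mkKer α G c c = 0 := by
          unfold mkKer; split_ifs <;> first | (exfalso; omega) | rfl
        have hmain : ∑ a ∈ Finset.range c, μ ℓ a * mkKer α G a c ≤ α * r ^ (c - 1) := by
          have hterm : ∀ a ∈ Finset.range c, μ ℓ a * mkKer α G a c
              ≤ (if a = 0 then 1 else A * r ^ (a - 1)) * α ^ (c - a) := by
            intro a ha
            have halt : a < c := Finset.mem_range.mp ha
            have hK : mkKer α G a c = α ^ (c - a) := by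
              have haG : a ≤ G := by omega
              have hne : c ≠ a - 1 := by omega
              simp [mkKer, haG, hne, halt]
            rw [hK]
            exact mul_le_mul_of_nonneg_right (hfB a (by omega)) (by positivity)
          calc ∑ a ∈ Finset.range c, μ ℓ a * mkKer α G a c
              ≤ ∑ a ∈ Finset.range c, (if a = 0 then 1 else A * r ^ (a - 1)) * α ^ (c - a) :=
                Finset.sum_le_sum hterm
            _ = α * r ^ (c - 1) := hgeomS c hc1
        by_cases hcG' : c + 1 ≤ G
        · have hK : mkKer α G (c+1) c = (1-2*α)/(1-α) := by
            simp [mkKer, hcG']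
          rw [hKcc, hK, mul_zero, add_zero]
          have hterm : μ ℓ (c+1) * ((1-2*α)/(1-α)) ≤ A * r ^ c * ((1-2*α)/(1-α)) :=
            mul_le_mul_of_nonneg_right (hfpt (c+1) (by omega) hcG') hq
          have hrc : r ^ c = r ^ (c-1) * r := by
            rw [← pow_succ]; congr 1; omega
          have key2 : α + A * r * ((1-2*α)/(1-α)) = A := by
            rw [hA, hr]; simp only [div_eq_mul_inv]; linear_combination (2*α^2*(1-2*α)⁻¹*(1-2*α)*(1-2*α)⁻¹) * mul_inv_cancel₀ h1'.ne' + (2*α^2*(1-2*α)⁻¹ - α) * mul_inv_cancel₀ h2'.ne'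
          calc ∑ a ∈ Finset.range c, μ ℓ a * mkKer α G a c + μ ℓ (c+1) * ((1-2*α)/(1-α))
              ≤ α * r ^ (c-1) + A * r ^ c * ((1-2*α)/(1-α)) := add_le_add hmain hterm
            _ = A * r ^ (c-1) := by
                rw [hrc]
                linear_combination r ^ (c-1) * key2
        · have hK : mkKer α G (c+1) c = 0 := by
            unfold mkKer; split_ifs <;> first | (exfalso; omega) | rfl
          rw [hKcc, hK, mul_zero, mul_zero, add_zero, add_zero]
          refine hmain.trans (mul_le_mul_of_nonneg_right ?_ (by positivity))
          rw [hA, le_div_iff₀ h2']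
          nlinarith
      have hgtail : (∑' b, if G < b then μ (ℓ+1) b else 0)
          ≤ (((ℓ:ℝ) + 1) + 1) * (α/(1-α)) * r ^ G := by
        set F' : ℕ × ℕ → ℝ := fun p => if G < p.2 then μ ℓ p.1 * mkKer α G p.1 p.2 else 0
          with hF'def
        have hF'nn : ∀ p, 0 ≤ F' p := by
          intro p; simp only [hF'def]; split_ifs
          exacts [hFnn p, le_refl 0]
        have hF'le : ∀ p, F' p ≤ μ ℓ p.1 * mkKer α G p.1 p.2 := by
          intro p; simp only [hF'def]; split_ifs
          exacts [le_refl _, hFnn p]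
        have hF' : Summable F' := Summable.of_nonneg_of_le hF'nn hF'le hF
        have hrow' : ∀ a, (∑' b, F' (a, b))
            = μ ℓ a * (∑' b, if G < b then mkKer α G a b else 0) := by
          intro a
          rw [← tsum_mul_left]
          refine tsum_congr fun b => ?_
          simp only [hF'def]
          split_ifs <;> simp
        have step1 : (∑' b, if G < b then μ (ℓ+1) b else 0) = ∑' a, ∑' b, F' (a, b) := by
          have hbb : (∑' b, if G < b then μ (ℓ+1) b else 0) = ∑' b, ∑' a, F' (a, b) := by
            refine tsum_congr fun b => ?_
            by_cases hb : G < b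
            · simp only [hF'def, if_pos hb]
              exact hrec ℓ b
            · simp only [hF'def, if_neg hb]
              simp
          rw [hbb]
          exact Summable.tsum_comm (f := fun a b => F' (a, b)) hF'
        have hta : Summable (fun a => μ ℓ a * ∑' b, if G < b then mkKer α G a b else 0) := by
          have h2 := ((summable_prod_of_nonneg hF'nn).mp hF').2
          exact h2.congr hrow'
        have hsplit := Summable.sum_add_tsum_nat_add
          (f := fun a => μ ℓ a * ∑' b, if G < b then mkKer α G a b else 0) (G+1) hta
        have hpart1 : ∑ a ∈ Finset.range (G+1),
            (μ ℓ a * ∑' b, if G < b then mkKer α G a b else 0)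
            ≤ α * r ^ G * (1-α)⁻¹ := by
          have hterm : ∀ a ∈ Finset.range (G+1),
              μ ℓ a * (∑' b, if G < b then mkKer α G a b else 0)
              ≤ ((if a = 0 then 1 else A * r ^ (a - 1)) * α ^ (G + 1 - a)) * (1-α)⁻¹ := by
            intro a ha
            have haG : a ≤ G := by
              have := Finset.mem_range.mp ha; omega
            rw [(mkKer_coltail_le hα hα4 haG).2]
            have h := mul_le_mul_of_nonneg_right (hfB a haG)
              (show (0:ℝ) ≤ α ^ (G+1-a) * (1-α)⁻¹ by positivity)
            calc μ ℓ a * (α ^ (G+1-a) * (1-α)⁻¹)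
                ≤ (if a = 0 then 1 else A * r ^ (a - 1)) * (α ^ (G+1-a) * (1-α)⁻¹) := h
              _ = ((if a = 0 then 1 else A * r ^ (a - 1)) * α ^ (G+1-a)) * (1-α)⁻¹ := by ring
          calc ∑ a ∈ Finset.range (G+1), (μ ℓ a * ∑' b, if G < b then mkKer α G a b else 0)
              ≤ ∑ a ∈ Finset.range (G+1),
                  ((if a = 0 then 1 else A * r ^ (a - 1)) * α ^ (G + 1 - a)) * (1-α)⁻¹ :=
                Finset.sum_le_sum hterm
            _ = (∑ a ∈ Finset.range (G+1),
                  (if a = 0 then 1 else A * r ^ (a - 1)) * α ^ (G + 1 - a)) * (1-α)⁻¹ :=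
                (Finset.sum_mul _ _ _).symm
            _ = α * r ^ G * (1-α)⁻¹ := by
                rw [hgeomS (G+1) (by omega)]
                norm_num
        have hpart2 : (∑' a : ℕ,
              μ ℓ (a + (G+1)) * ∑' b, if G < b then mkKer α G (a + (G+1)) b else 0)
            ≤ ∑' b, if G < b then μ ℓ b else 0 := by
          have htail_eq : (∑' a : ℕ, μ ℓ (a + (G+1))) = ∑' b, if G < b then μ ℓ b else 0 := by
            have hinj : Function.Injective (fun j : ℕ => j + (G+1)) :=
              fun x y h => by simpa using h
            have hsupp : ∀ b, b ∉ Set.range (fun j : ℕ => j + (G+1)) →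
                (if G < b then μ ℓ b else 0) = 0 := by
              intro b hb
              have : ¬ G < b := fun h => hb ⟨b - (G+1), show b - (G+1) + (G+1) = b by omega⟩
              simp [this]
            have heq := hinj.tsum_eq (f := fun b => if G < b then μ ℓ b else 0)
              (Function.support_subset_iff'.2 hsupp)
            rw [← heq]
            refine tsum_congr fun j => ?_
            rw [if_pos (by omega)]
          rw [← htail_eq]
          refine Summable.tsum_le_tsum ?_ ?_ ?_
          · intro a
            have ht1 := (mkKer_coltail_all hα hα4 G (a + (G+1))).2
            calc μ ℓ (a + (G+1)) * (∑' b, if G < b then mkKer α G (a + (G+1)) b else 0)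
                ≤ μ ℓ (a + (G+1)) * 1 := mul_le_mul_of_nonneg_left ht1 (hfnn _)
              _ = μ ℓ (a + (G+1)) := mul_one _
          · exact (summable_nat_add_iff (G+1)).2 hta
          · exact (summable_nat_add_iff (G+1)).2 hfsum
        calc (∑' b, if G < b then μ (ℓ+1) b else 0)
            = ∑' a, μ ℓ a * (∑' b, if G < b then mkKer α G a b else 0) := by
              rw [step1]; exact tsum_congr hrow'
          _ = (∑ a ∈ Finset.range (G+1),
                (μ ℓ a * ∑' b, if G < b then mkKer α G a b else 0))
              + (∑' a : ℕ, μ ℓ (a + (G+1)) * ∑' b, if G < b then mkKer α G (a + (G+1)) b else 0) :=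
              hsplit.symm
          _ ≤ α * r ^ G * (1-α)⁻¹ + ((ℓ:ℝ)+1) * (α/(1-α)) * r ^ G :=
              add_le_add hpart1 (hpart2.trans hftail)
          _ = (((ℓ:ℝ) + 1) + 1) * (α/(1-α)) * r ^ G := by
              rw [div_eq_mul_inv]; ring
      refine ⟨hgnn, hgsum, hgtsum, hgpt, ?_⟩
      calc (∑' b, if G < b then μ (ℓ+1) b else 0)
          ≤ (((ℓ:ℝ) + 1) + 1) * (α/(1-α)) * r ^ G := hgtail
        _ = ((↑(ℓ+1) : ℝ) + 1) * (α/(1-α)) * r ^ G := by push_cast; ring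
  intro ℓ _
  obtain ⟨_, _, _, hpt, htail⟩ := main ℓ
  exact ⟨hpt, htail⟩
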